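/- In an instance of stable hypergraph b-matching on a laminar hypergraph, the greedy algorithm that processes hyperedges in an order compatible with inclusion (minimal first), adds each blocking hyperedge f, and then removes the inclusion-wise maximal elements among the worst matching-hyperedges at oversaturated vertices, terminates with a stable b-matching. In particular, every laminar hypergraph instance of stable hypergraph b-matching admits a stable b-matching. -/

import Mathlib

open scoped Classical

/-- Hyperedge `e ∉ M` blocks `M`. -/
def BlocksBM {V : Type*} [DecidableEq V] (E : Finset (Finset V)) (b : V → ℕ)
    (pref : V → Finset V → Finset V → Prop)
    (M : Finset (Finset V)) (e : Finset V) : Prop :=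
  e ∈ E ∧ e ∉ M ∧ ∀ v ∈ e,
    ¬ ((M.filter (fun e' => v ∈ e')).card = b v ∧ ∀ f ∈ M, v ∈ f → pref v f e)

/-- One step of the greedy algorithm: if `f` blocks the current `b`-matching `M`, add `f`,
collect for each oversaturated vertex its worst incident matching hyperedge, and remove
the inclusion-wise maximal members of that collection. -/
noncomputable def greedyStep {V : Type*} [DecidableEq V]
    (E : Finset (Finset V)) (b : V → ℕ)
    (pref : V → Finset V → Finset V → Prop)
    (M : Finset (Finset V)) (f : Finset V) : Finset (Finset V) :=
  if BlocksBM E b pref M f then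
    let N := insert f M
    let X := N.filter (fun e => ∃ v ∈ e,
      b v < (N.filter (fun e' => v ∈ e')).card ∧
      ∀ e' ∈ N, v ∈ e' → e' = e ∨ pref v e' e)
    let Y := X.filter (fun e => ∀ e' ∈ X, ¬ e ⊂ e')
    N \ Y
  else M

section Aux
variable {V : Type*} [DecidableEq V]

def WitnessBM (b : V → ℕ) (pref : V → Finset V → Finset V → Prop)
    (M : Finset (Finset V)) (g : Finset V) : Prop :=
  ∃ v ∈ g, (M.filter (fun e' => v ∈ e')).card = b v ∧ ∀ e ∈ M, v ∈ e → pref v e g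

def InvBM (E : Finset (Finset V)) (b : V → ℕ) (pref : V → Finset V → Finset V → Prop)
    (P M : Finset (Finset V)) : Prop :=
  M ⊆ E ∧ M ⊆ P ∧ (∀ v, (M.filter (fun e' => v ∈ e')).card ≤ b v) ∧
    ∀ g ∈ P, g ∉ M → WitnessBM b pref M g

lemma exists_worst (E : Finset (Finset V)) (pref : V → Finset V → Finset V → Prop)
    (htrans : ∀ v, Transitive (pref v))
    (htotal : ∀ v, ∀ e1 ∈ E, ∀ e2 ∈ E, v ∈ e1 → v ∈ e2 → e1 ≠ e2 →
      pref v e1 e2 ∨ pref v e2 e1)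
    (v : V) :
    ∀ (s : Finset (Finset V)), s.Nonempty → (∀ e ∈ s, e ∈ E ∧ v ∈ e) →
      ∃ w ∈ s, ∀ e ∈ s, e ≠ w → pref v e w := by
  intro s
  induction s using Finset.induction_on with
  | empty => intro h; exact absurd h (by simp)
  | @insert a s ha ih =>
    intro _ hE
    rcases s.eq_empty_or_nonempty with rfl | hne
    · refine ⟨a, Finset.mem_insert_self a _, ?_⟩
      intro e he hne
      simp only [Finset.mem_insert, Finset.notMem_empty, or_false] at he
      exact absurd he hne
    · obtain ⟨w, hw, hwmin⟩ := ih hne (fun e he => hE e (Finset.mem_insert_of_mem he))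
      have haw : a ≠ w := fun h => ha (h ▸ hw)
      have haE := hE a (Finset.mem_insert_self a s)
      have hwE := hE w (Finset.mem_insert_of_mem hw)
      rcases htotal v a haE.1 w hwE.1 haE.2 hwE.2 haw with h | h
      · refine ⟨w, Finset.mem_insert_of_mem hw, ?_⟩
        intro e he hne'
        rcases Finset.mem_insert.1 he with rfl | he'
        · exact h
        · exact hwmin e he' hne'
      · refine ⟨a, Finset.mem_insert_self a s, ?_⟩
        intro e he hne'
        rcases Finset.mem_insert.1 he with rfl | he'
        · exact absurd rfl hne'
        · by_cases hew : e = w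
          · exact hew ▸ h
          · exact htrans v (hwmin e he' hew) h

lemma step_inv (E : Finset (Finset V)) (b : V → ℕ)
    (pref : V → Finset V → Finset V → Prop)
    (htrans : ∀ v, Transitive (pref v))
    (htotal : ∀ v, ∀ e1 ∈ E, ∀ e2 ∈ E, v ∈ e1 → v ∈ e2 → e1 ≠ e2 →
      pref v e1 e2 ∨ pref v e2 e1)
    (hlam : ∀ e1 ∈ E, ∀ e2 ∈ E, e1 ∩ e2 = ∅ ∨ e1 ⊆ e2 ∨ e2 ⊆ e1)
    (P M : Finset (Finset V)) (f : Finset V) (hf : f ∈ E)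
    (hord : ∀ e ∈ P, ¬ f ⊂ e) (hInv : InvBM E b pref P M) :
    InvBM E b pref (insert f P) (greedyStep E b pref M f) := by
  obtain ⟨hME, hMP, hdeg, hwit⟩ := hInv
  by_cases hb : BlocksBM E b pref M f
  case neg =>
    rw [greedyStep, if_neg hb]
    refine ⟨hME, hMP.trans (Finset.subset_insert _ _), hdeg, ?_⟩
    intro g hg hgM
    rcases Finset.mem_insert.1 hg with rfl | hg'
    · rw [BlocksBM] at hb
      push_neg at hb
      obtain ⟨v, hv, hcond⟩ := hb hf hgM
      exact ⟨v, hv, hcond⟩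
    · exact hwit g hg' hgM
  case pos =>
    obtain ⟨hfE', hfM, hblk⟩ := hb
    have hb' : BlocksBM E b pref M f := ⟨hfE', hfM, hblk⟩
    set N : Finset (Finset V) := insert f M with hN
    set X : Finset (Finset V) := N.filter (fun e => ∃ v ∈ e,
      b v < (N.filter (fun e' => v ∈ e')).card ∧
      ∀ e' ∈ N, v ∈ e' → e' = e ∨ pref v e' e) with hX
    set Y : Finset (Finset V) := X.filter (fun e => ∀ e' ∈ X, ¬ e ⊂ e') with hY
    have hstep : greedyStep E b pref M f = N \ Y := by
      rw [greedyStep, if_pos hb']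
    rw [hstep]
    have hNE : N ⊆ E := Finset.insert_subset hf hME
    have hXN : X ⊆ N := Finset.filter_subset _ _
    have hYX : Y ⊆ X := Finset.filter_subset _ _
    have hYN : Y ⊆ N := hYX.trans hXN
    have degN_mem : ∀ v, v ∈ f → (N.filter (fun e' => v ∈ e')).card
        = (M.filter (fun e' => v ∈ e')).card + 1 := by
      intro v hv
      rw [hN, Finset.filter_insert, if_pos hv,
        Finset.card_insert_of_notMem (fun h => hfM (Finset.mem_filter.1 h).1)]
    have degN_not : ∀ v, v ∉ f → N.filter (fun e' => v ∈ e') = M.filter (fun e' => v ∈ e') := by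
      intro v hv; rw [hN, Finset.filter_insert, if_neg hv]
    have hsubf : ∀ e ∈ M, ∀ v : V, v ∈ e → v ∈ f → e ⊆ f := by
      intro e he v hv hvf
      rcases hlam e (hME he) f hf with h | h | h
      · exact absurd (Finset.mem_inter.2 ⟨hv, hvf⟩) (by rw [h]; simp)
      · exact h
      · rcases eq_or_ne f e with rfl | hne
        · exact absurd he hfM
        · exact absurd (Finset.ssubset_iff_subset_ne.2 ⟨h, hne⟩) (hord e (hMP he))
    have hXmem : ∀ e ∈ X, e ∈ M ∧ e ⊆ f := by
      intro e he
      obtain ⟨heN, v, hv, hover, hworst⟩ := Finset.mem_filter.1 he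
      have hvf : v ∈ f := by
        by_contra hvf
        rw [degN_not v hvf] at hover
        exact absurd hover (not_lt.2 (hdeg v))
      have heM : e ∈ M := by
        rcases Finset.mem_insert.1 heN with rfl | h
        · exfalso
          rw [degN_mem v hvf] at hover
          have hdm : (M.filter (fun e' => v ∈ e')).card = b v :=
            le_antisymm (hdeg v) (by omega)
          have hbv := hblk v hvf
          push_neg at hbv
          obtain ⟨e0, he0, hve0, hnp⟩ := hbv hdm
          rcases hworst e0 (Finset.mem_insert_of_mem he0) hve0 with h0 | hp
          · exact hfM (h0 ▸ he0)
          · exact hnp hp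
        · exact h
      exact ⟨heM, hsubf e heM v hv hvf⟩
    have hfY : f ∉ Y := fun h => hfM (hXmem f (hYX h)).1
    have hfM' : f ∈ N \ Y := Finset.mem_sdiff.2 ⟨Finset.mem_insert_self _ _, hfY⟩
    have huniq : ∀ y1 ∈ Y, ∀ y2 ∈ Y, ∀ v : V, v ∈ y1 → v ∈ y2 → y1 = y2 := by
      intro y1 hy1 y2 hy2 v hv1 hv2
      obtain ⟨hy1X, hmax1⟩ := Finset.mem_filter.1 hy1
      obtain ⟨hy2X, hmax2⟩ := Finset.mem_filter.1 hy2
      have h1E := hME (hXmem y1 hy1X).1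
      have h2E := hME (hXmem y2 hy2X).1
      rcases hlam y1 h1E y2 h2E with h | h | h
      · exact absurd (Finset.mem_inter.2 ⟨hv1, hv2⟩) (by rw [h]; simp)
      · rcases eq_or_ne y1 y2 with he | hne
        · exact he
        · exact absurd (Finset.ssubset_iff_subset_ne.2 ⟨h, hne⟩) (hmax1 y2 hy2X)
      · rcases eq_or_ne y1 y2 with he | hne
        · exact he
        · exact absurd (Finset.ssubset_iff_subset_ne.2 ⟨h, hne.symm⟩) (hmax2 y1 hy1X)
    have hexY : ∀ v ∈ f, (M.filter (fun e' => v ∈ e')).card = b v → ∃ y ∈ Y, v ∈ y := by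
      intro v hvf hdm
      have hover : b v < (N.filter (fun e' => v ∈ e')).card := by
        rw [degN_mem v hvf, hdm]; omega
      obtain ⟨w, hw, hwmin⟩ := exists_worst E pref htrans htotal v
        (N.filter (fun e' => v ∈ e'))
        ⟨f, Finset.mem_filter.2 ⟨Finset.mem_insert_self _ _, hvf⟩⟩
        (fun e he => ⟨hNE (Finset.mem_filter.1 he).1, (Finset.mem_filter.1 he).2⟩)
      obtain ⟨hwN, hvw⟩ := Finset.mem_filter.1 hw
      have hwX : w ∈ X := by
        refine Finset.mem_filter.2 ⟨hwN, v, hvw, hover, ?_⟩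
        intro e' he' hve'
        by_cases h : e' = w
        · exact Or.inl h
        · exact Or.inr (hwmin e' (Finset.mem_filter.2 ⟨he', hve'⟩) h)
      have hwS : w ∈ X.filter (fun e => w ⊆ e) :=
        Finset.mem_filter.2 ⟨hwX, Finset.Subset.refl w⟩
      obtain ⟨y, hyS, hymax'⟩ := Finset.exists_maximal (s := X.filter (fun e => w ⊆ e)) ⟨w, hwS⟩
      have hymax : ∀ x ∈ X.filter (fun e => w ⊆ e), ¬ y < x := fun x hx hlt =>
        lt_irrefl _ (lt_of_lt_of_le hlt (hymax' hx hlt.le))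
      obtain ⟨hyX, hwy⟩ := Finset.mem_filter.1 hyS
      refine ⟨y, Finset.mem_filter.2 ⟨hyX, ?_⟩, hwy hvw⟩
      intro e' he' hss
      exact hymax e' (Finset.mem_filter.2 ⟨he', hwy.trans hss.subset⟩) hss
    have hfilter_sdiff : ∀ v : V, (N \ Y).filter (fun e' => v ∈ e')
        = N.filter (fun e' => v ∈ e') \ Y.filter (fun e' => v ∈ e') := by
      intro v; ext e; simp only [Finset.mem_filter, Finset.mem_sdiff]; tauto
    have degM' : ∀ v : V, ((N \ Y).filter (fun e' => v ∈ e')).card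
        = (N.filter (fun e' => v ∈ e')).card - (Y.filter (fun e' => v ∈ e')).card := by
      intro v
      rw [hfilter_sdiff v, Finset.card_sdiff_of_subset (Finset.filter_subset_filter _ hYN)]
    have hsame : ∀ v : V, v ∉ f →
        (N \ Y).filter (fun e' => v ∈ e') = M.filter (fun e' => v ∈ e') := by
      intro v hv
      rw [hfilter_sdiff v, degN_not v hv]
      have hYe : Y.filter (fun e' => v ∈ e') = ∅ := by
        rw [Finset.filter_eq_empty_iff]
        intro y hy hvy
        exact hv ((hXmem y (hYX hy)).2 hvy)
      rw [hYe, Finset.sdiff_empty]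
    have hsat : ∀ v ∈ f, (M.filter (fun e' => v ∈ e')).card = b v →
        ((N \ Y).filter (fun e' => v ∈ e')).card = b v := by
      intro v hvf hdm
      obtain ⟨y, hy, hvy⟩ := hexY v hvf hdm
      have hcard1 : (Y.filter (fun e' => v ∈ e')).card = 1 := by
        refine le_antisymm ?_ ?_
        · rw [Finset.card_le_one]
          intro a ha c hc
          exact huniq a (Finset.mem_filter.1 ha).1 c (Finset.mem_filter.1 hc).1 v
            (Finset.mem_filter.1 ha).2 (Finset.mem_filter.1 hc).2
        · exact Finset.card_pos.2 ⟨y, Finset.mem_filter.2 ⟨hy, hvy⟩⟩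
      rw [degM' v, degN_mem v hvf, hdm, hcard1]; omega
    have hbm : ∀ v, ((N \ Y).filter (fun e' => v ∈ e')).card ≤ b v := by
      intro v
      by_cases hvf : v ∈ f
      · rcases eq_or_lt_of_le (hdeg v) with heq | hlt
        · exact le_of_eq (hsat v hvf heq)
        · rw [degM' v, degN_mem v hvf]; omega
      · rw [hsame v hvf]; exact hdeg v
    refine ⟨fun x hx => hNE (Finset.mem_sdiff.1 hx).1, ?_, hbm, ?_⟩
    · intro e he
      rcases Finset.mem_insert.1 (Finset.mem_sdiff.1 he).1 with rfl | h
      · exact Finset.mem_insert_self _ _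
      · exact Finset.mem_insert_of_mem (hMP h)
    · intro g hg hgM'
      rcases Finset.mem_insert.1 hg with rfl | hgP
      · exact absurd hfM' hgM'
      by_cases hgM : g ∈ M
      · have hgY : g ∈ Y := by
          by_contra h
          exact hgM' (Finset.mem_sdiff.2 ⟨Finset.mem_insert_of_mem hgM, h⟩)
        obtain ⟨hgX, _⟩ := Finset.mem_filter.1 hgY
        obtain ⟨hgN, u, hu, hover, hworst⟩ := Finset.mem_filter.1 hgX
        have huf : u ∈ f := by
          by_contra huf
          rw [degN_not u huf] at hover
          exact absurd hover (not_lt.2 (hdeg u))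
        have hdm : (M.filter (fun e' => u ∈ e')).card = b u := by
          rw [degN_mem u huf] at hover
          exact le_antisymm (hdeg u) (by omega)
        refine ⟨u, hu, hsat u huf hdm, ?_⟩
        intro e he hue
        rcases hworst e (Finset.mem_sdiff.1 he).1 hue with h0 | hp
        · exact absurd (h0 ▸ he) hgM'
        · exact hp
      · obtain ⟨v, hvg, hdm, hpref⟩ := hwit g hgP hgM
        by_cases hvf : v ∈ f
        · refine ⟨v, hvg, hsat v hvf hdm, ?_⟩
          intro e he hve
          rcases Finset.mem_insert.1 (Finset.mem_sdiff.1 he).1 with rfl | heM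
          · have hbv := hblk v hvf
            push_neg at hbv
            obtain ⟨e0, he0, hve0, hnp⟩ := hbv hdm
            have he0f : e0 ≠ e := fun h => hfM (h ▸ he0)
            rcases htotal v e0 (hME he0) e hf hve0 hve he0f with h | h
            · exact absurd h hnp
            · exact htrans v h (hpref e0 he0 hve0)
          · exact hpref e heM hve
        · refine ⟨v, hvg, by rw [hsame v hvf]; exact hdm, ?_⟩
          intro e he hve
          have hem : e ∈ M.filter (fun e' => v ∈ e') := by
            rw [← hsame v hvf]; exact Finset.mem_filter.2 ⟨he, hve⟩
          exact hpref e (Finset.mem_filter.1 hem).1 hve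

lemma foldl_inv (E : Finset (Finset V)) (b : V → ℕ)
    (pref : V → Finset V → Finset V → Prop)
    (htrans : ∀ v, Transitive (pref v))
    (htotal : ∀ v, ∀ e1 ∈ E, ∀ e2 ∈ E, v ∈ e1 → v ∈ e2 → e1 ≠ e2 →
      pref v e1 e2 ∨ pref v e2 e1)
    (hlam : ∀ e1 ∈ E, ∀ e2 ∈ E, e1 ∩ e2 = ∅ ∨ e1 ⊆ e2 ∨ e2 ⊆ e1) :
    ∀ (L : List (Finset V)) (P M : Finset (Finset V)),
      (∀ e ∈ L, e ∈ E) →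
      (∀ p ∈ P, ∀ e ∈ L, ¬ e ⊂ p) →
      L.Pairwise (fun e1 e2 => ¬ e2 ⊂ e1) →
      InvBM E b pref P M →
      InvBM E b pref (P ∪ L.toFinset) (L.foldl (greedyStep E b pref) M) := by
  intro L
  induction L with
  | nil => intro P M _ _ _ h; simpa using h
  | cons f t ih =>
    intro P M hLE hPL hpair hInv
    have h1 : InvBM E b pref (insert f P) (greedyStep E b pref M f) :=
      step_inv E b pref htrans htotal hlam P M f (hLE f List.mem_cons_self)
        (fun e he => hPL e he f List.mem_cons_self) hInv
    have hpair' := List.pairwise_cons.1 hpair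
    have h2 := ih (insert f P) (greedyStep E b pref M f)
      (fun e he => hLE e (List.mem_cons_of_mem f he))
      (by
        intro p hp e he
        rcases Finset.mem_insert.1 hp with rfl | hpP
        · exact hpair'.1 e he
        · exact hPL p hpP e (List.mem_cons_of_mem f he))
      hpair'.2 h1
    have hset : insert f P ∪ t.toFinset = P ∪ (f :: t).toFinset := by
      ext x
      simp only [Finset.mem_union, Finset.mem_insert, List.toFinset_cons, List.mem_toFinset]
      tauto
    rw [hset] at h2
    exact h2

theorem laminar_greedy_stable' {V' : Type*} [DecidableEq V']
    (E : Finset (Finset V')) (b : V' → ℕ)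
    (pref : V' → Finset V' → Finset V' → Prop)
    (hirr : ∀ v e, ¬ pref v e e)
    (htrans : ∀ v, Transitive (pref v))
    (htotal : ∀ v, ∀ e1 ∈ E, ∀ e2 ∈ E, v ∈ e1 → v ∈ e2 → e1 ≠ e2 →
      pref v e1 e2 ∨ pref v e2 e1)
    (hlam : ∀ e1 ∈ E, ∀ e2 ∈ E, e1 ∩ e2 = ∅ ∨ e1 ⊆ e2 ∨ e2 ⊆ e1)
    (L : List (Finset V')) (hnodup : L.Nodup)
    (henum : ∀ e, e ∈ E ↔ e ∈ L)
    (horder : L.Pairwise (fun e1 e2 => ¬ e2 ⊂ e1)) :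
    (let M := L.foldl (greedyStep E b pref) ∅
     M ⊆ E ∧ (∀ v, (M.filter (fun e' => v ∈ e')).card ≤ b v) ∧
       ∀ e, ¬ BlocksBM E b pref M e) := by
  intro M
  have hInv0 : InvBM E b pref ∅ ∅ :=
    ⟨Finset.empty_subset _, Finset.empty_subset _, by simp, by simp⟩
  have h := foldl_inv E b pref htrans htotal hlam L ∅ ∅
    (fun e he => (henum e).2 he) (by simp) horder hInv0
  rw [Finset.empty_union] at h
  obtain ⟨hME, hMP, hdeg, hwit⟩ := h
  refine ⟨hME, hdeg, ?_⟩
  intro e hbl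
  obtain ⟨heE, heM, hcond⟩ := hbl
  have heL : e ∈ L.toFinset := List.mem_toFinset.2 ((henum e).1 heE)
  obtain ⟨v, hv, hd, hp⟩ := hwit e heL heM
  exact hcond v hv ⟨hd, fun g hg hvg => hp g hg hvg⟩
end Aux

/-- on a laminar hypergraph, the greedy algorithm processing hyperedges in an
order compatible with inclusion (minimal first) terminates with a stable `b`-matching; in
particular every laminar instance admits a stable `b`-matching. -/
theorem laminar_greedy_stable {V : Type*} [DecidableEq V]
    (E : Finset (Finset V)) (b : V → ℕ)
    (pref : V → Finset V → Finset V → Prop)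
    (hirr : ∀ v e, ¬ pref v e e)
    (htrans : ∀ v, Transitive (pref v))
    (htotal : ∀ v, ∀ e1 ∈ E, ∀ e2 ∈ E, v ∈ e1 → v ∈ e2 → e1 ≠ e2 →
      pref v e1 e2 ∨ pref v e2 e1)
    (hlam : ∀ e1 ∈ E, ∀ e2 ∈ E, e1 ∩ e2 = ∅ ∨ e1 ⊆ e2 ∨ e2 ⊆ e1)
    (L : List (Finset V)) (hnodup : L.Nodup)
    (henum : ∀ e, e ∈ E ↔ e ∈ L)
    -- order compatible with inclusion: an edge is never strictly contained in an earlier one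
    (horder : L.Pairwise (fun e1 e2 => ¬ e2 ⊂ e1)) :
    (let M := L.foldl (greedyStep E b pref) ∅
     M ⊆ E ∧ (∀ v, (M.filter (fun e' => v ∈ e')).card ≤ b v) ∧
       ∀ e, ¬ BlocksBM E b pref M e) ∧
    (∃ M : Finset (Finset V), M ⊆ E ∧
      (∀ v, (M.filter (fun e' => v ∈ e')).card ≤ b v) ∧
      ∀ e, ¬ BlocksBM E b pref M e) := by
  have h := laminar_greedy_stable' E b pref hirr htrans htotal hlam L hnodup henum horder
  exact ⟨h, ⟨L.foldl (greedyStep E b pref) ∅, h⟩⟩
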